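/- Let ψ_n : ℝⁿ → ℝ ∪ {+∞} be proper convex and let ψ_s : ℝⁿ → ℝ be differentiable and μ-strongly convex with μ > 0 (i.e., ψ_s − (μ/2)‖·‖² is convex). Let L > μ, x̃ ∈ ℝⁿ, and let y' be a minimizer over ℝⁿ of u ↦ ℓ_{ψ_s}(u; x̃) + ψ_n(u) + (L/2)‖u − x̃‖². Set s := (L − μ)(x̃ − y') and define γ(z) := ℓ_{ψ_s}(y'; x̃) + ψ_n(y') + ⟨s, z − y'⟩ + (μ/2)‖y' − x̃‖² + (μ/2)‖z − y'‖². Then γ(z) ≤ ψ_s(z) + ψ_n(z) for every z ∈ ℝⁿ. -/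

import Mathlib

open scoped RealInnerProductSpace
open Topology Filter Set

-- directional derivative bound for a convex function along a segment
lemma dir_le {E : Type*} [NormedAddCommGroup E] [InnerProductSpace ℝ E]
    {h : E → ℝ} (hc : ConvexOn ℝ Set.univ h) (x z : E) {c : ℝ}
    (hd : HasDerivAt (fun t : ℝ => h (x + t • (z - x))) c 0) :
    h x + c ≤ h z := by
  set f : ℝ → ℝ := fun t => h (x + t • (z - x)) with hf
  have hslope : Filter.Tendsto (slope f 0) (𝓝[>] 0) (𝓝 c) :=
    (hasDerivAt_iff_tendsto_slope.mp hd).mono_left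
      (nhdsWithin_mono _ (fun t ht => ne_of_gt ht))
  have hev : ∀ᶠ t in 𝓝[>] (0:ℝ), slope f 0 t ≤ h z - h x := by
    filter_upwards [Ioc_mem_nhdsGT_of_mem (by norm_num : (0:ℝ) ∈ Set.Ico 0 1)] with t ht
    have hcomb : x + t • (z - x) = (1 - t) • x + t • z := by
      rw [sub_smul, one_smul, smul_sub]; abel
    have hcv := hc.2 (Set.mem_univ x) (Set.mem_univ z) (by linarith [ht.2] : (0:ℝ) ≤ 1 - t)
      (le_of_lt ht.1) (by ring)
    rw [← hcomb] at hcv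
    have hf0 : f 0 = h x := by simp [hf]
    have : f t ≤ (1 - t) * h x + t * h z := hcv
    rw [slope_def_field, hf0, sub_zero, div_le_iff₀ ht.1]
    nlinarith
  have := le_of_tendsto hslope hev
  linarith

set_option maxHeartbeats 2000000 in
/-- Let `ψ_n` be proper convex (modeled as `EReal`-valued, never `⊥`)
and let `ψ_s` be differentiable and `μ`-strongly convex (`ψ_s − (μ/2)‖·‖²` convex),
`μ > 0`.  Let `L > μ`, `x̃ ∈ ℝⁿ`, let `y'` minimize
`u ↦ ℓ_{ψ_s}(u; x̃) + ψ_n(u) + (L/2)‖u − x̃‖²`, set `s := (L − μ)(x̃ − y')` and define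
`γ(z) := ℓ_{ψ_s}(y'; x̃) + ψ_n(y') + ⟨s, z − y'⟩ + (μ/2)‖y' − x̃‖² + (μ/2)‖z − y'‖²`.
Then `γ(z) ≤ ψ_s(z) + ψ_n(z)` for every `z`. -/
theorem stmt18 {n : ℕ} (ψn : EuclideanSpace ℝ (Fin n) → EReal)
    (hbot : ∀ x, ψn x ≠ ⊥) (hproper : ∃ x, ψn x ≠ ⊤)
    (hconv : ∀ x y : EuclideanSpace ℝ (Fin n), ∀ a b : ℝ, 0 ≤ a → 0 ≤ b → a + b = 1 →
      ψn (a • x + b • y) ≤ (a : EReal) * ψn x + (b : EReal) * ψn y)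
    (ψs : EuclideanSpace ℝ (Fin n) → ℝ) (hψs : Differentiable ℝ ψs)
    (μ : ℝ) (hμ : 0 < μ)
    (hsc : ConvexOn ℝ Set.univ (fun z : EuclideanSpace ℝ (Fin n) =>
      ψs z - μ / 2 * ‖z‖ ^ 2))
    (L : ℝ) (hL : μ < L)
    (xtilde : EuclideanSpace ℝ (Fin n))
    (y' : EuclideanSpace ℝ (Fin n)) (hy'fin : ψn y' ≠ ⊤)
    (hy'min : ∀ u : EuclideanSpace ℝ (Fin n),
      ((ψs xtilde + ⟪gradient ψs xtilde, y' - xtilde⟫ + L / 2 * ‖y' - xtilde‖ ^ 2 : ℝ) :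
          EReal) + ψn y' ≤
        ((ψs xtilde + ⟪gradient ψs xtilde, u - xtilde⟫ + L / 2 * ‖u - xtilde‖ ^ 2 : ℝ) :
          EReal) + ψn u)
    (s : EuclideanSpace ℝ (Fin n)) (hs : s = (L - μ) • (xtilde - y'))
    (γ : EuclideanSpace ℝ (Fin n) → EReal)
    (hγ : γ = fun z => ((ψs xtilde + ⟪gradient ψs xtilde, y' - xtilde⟫
        + ⟪s, z - y'⟫ + μ / 2 * ‖y' - xtilde‖ ^ 2 + μ / 2 * ‖z - y'‖ ^ 2 : ℝ) : EReal)
        + ψn y') :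
    ∀ z : EuclideanSpace ℝ (Fin n), γ z ≤ (ψs z : EReal) + ψn z := by
  intro z
  set gr : EuclideanSpace ℝ (Fin n) := gradient ψs xtilde with hgr
  set d : EuclideanSpace ℝ (Fin n) := z - y' with hd
  set a : ℝ := (ψn y').toReal with ha
  have hay : ψn y' = (a : EReal) := (EReal.coe_toReal hy'fin (hbot y')).symm
  -- Step A : strong convexity lower bound
  have hA : ψs xtilde + ⟪gr, z - xtilde⟫ + μ / 2 * ‖z - xtilde‖ ^ 2 ≤ ψs z := by
    set v : EuclideanSpace ℝ (Fin n) := z - xtilde with hv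
    -- derivative of the line restriction of ψs - μ/2 ‖·‖²
    have hline : HasDerivAt (fun t : ℝ => xtilde + t • v) v 0 := by
      simpa using ((hasDerivAt_id (0:ℝ)).smul_const v).const_add xtilde
    have hFg : HasFDerivAt ψs (InnerProductSpace.toDual ℝ (EuclideanSpace ℝ (Fin n)) gr) xtilde :=
      (hψs xtilde).hasGradientAt.hasFDerivAt
    have hFg' : HasFDerivAt ψs (InnerProductSpace.toDual ℝ (EuclideanSpace ℝ (Fin n)) gr)
        ((fun t : ℝ => xtilde + t • v) 0) := by simpa using hFg
    have h1 : HasDerivAt (fun t : ℝ => ψs (xtilde + t • v)) ⟪gr, v⟫ 0 := by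
      have := hFg'.comp_hasDerivAt 0 hline
      simp [InnerProductSpace.toDual_apply_apply] at this
      exact this
    have hnorm : ∀ t : ℝ, ‖xtilde + t • v‖ ^ 2
        = ‖xtilde‖ ^ 2 + 2 * ⟪xtilde, v⟫ * t + ‖v‖ ^ 2 * t ^ 2 := by
      intro t
      rw [norm_add_sq_real, real_inner_smul_right, norm_smul]
      simp [mul_pow, sq_abs]
      ring
    have h2 : HasDerivAt (fun t : ℝ => μ / 2 * ‖xtilde + t • v‖ ^ 2) (μ * ⟪xtilde, v⟫) 0 := by
      have hpoly : HasDerivAt (fun t : ℝ =>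
          μ / 2 * (‖xtilde‖ ^ 2 + 2 * ⟪xtilde, v⟫ * t + ‖v‖ ^ 2 * t ^ 2))
          (μ * ⟪xtilde, v⟫) 0 := by
        have ht2 : HasDerivAt (fun t : ℝ => t ^ 2) (0 : ℝ) 0 := by
          simpa using hasDerivAt_pow 2 (0:ℝ)
        have := (((hasDerivAt_const (0:ℝ) (‖xtilde‖^2)).add
          ((hasDerivAt_id (0:ℝ)).const_mul (2 * ⟪xtilde, v⟫))).add
          (ht2.const_mul (‖v‖^2))).const_mul (μ/2)
        convert this using 1
        · rfl
        · rfl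
        · rfl
        · ring
      have : (fun t : ℝ => μ / 2 * ‖xtilde + t • v‖ ^ 2)
          = fun t : ℝ => μ / 2 * (‖xtilde‖ ^ 2 + 2 * ⟪xtilde, v⟫ * t + ‖v‖ ^ 2 * t ^ 2) := by
        funext t; rw [hnorm t]
      rw [this]; exact hpoly
    have hder : HasDerivAt (fun t : ℝ =>
        (fun z : EuclideanSpace ℝ (Fin n) => ψs z - μ / 2 * ‖z‖ ^ 2) (xtilde + t • v))
        (⟪gr, v⟫ - μ * ⟪xtilde, v⟫) 0 := h1.sub h2
    have := dir_le hsc xtilde (xtilde + v) (by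
      have : z - xtilde = v := rfl
      simpa [add_sub_cancel_left] using hder)
    have hzv : xtilde + v = z := by simp [hv]
    rw [hzv] at this
    have this2 : ψs xtilde - μ / 2 * ‖xtilde‖ ^ 2 + (⟪gr, v⟫ - μ * ⟪xtilde, v⟫)
        ≤ ψs z - μ / 2 * ‖z‖ ^ 2 := this
    have hexp : ‖z‖ ^ 2 = ‖xtilde‖ ^ 2 + 2 * ⟪xtilde, v⟫ + ‖v‖ ^ 2 := by
      have : z = xtilde + v := hzv.symm
      rw [this, norm_add_sq_real]
    rw [hexp] at this2
    nlinarith [this2]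
  -- Step B : subgradient inequality for ψn, assuming ψn z is finite
  simp only [hγ, hs]
  by_cases hzt : ψn z = ⊤
  · rw [hzt, EReal.add_top_of_ne_bot (by exact_mod_cast EReal.coe_ne_bot (ψs z))]
    exact le_top
  set r : ℝ := (ψn z).toReal with hr
  have hrz : ψn z = (r : EReal) := (EReal.coe_toReal hzt (hbot z)).symm
  have hB : a - ⟪gr, d⟫ - L * ⟪y' - xtilde, d⟫ ≤ r := by
    have key : ∀ t : ℝ, 0 < t → t ≤ 1 →
        a ≤ ⟪gr, d⟫ + L * ⟪y' - xtilde, d⟫ + L / 2 * t * ‖d‖ ^ 2 + r := by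
      intro t ht0 ht1
      have hcomb : (1 - t) • y' + t • z = y' + t • d := by
        rw [hd, sub_smul, one_smul, smul_sub]; abel
      have hcv := hconv y' z (1 - t) t (by linarith) (le_of_lt ht0) (by ring)
      rw [hcomb, hay, hrz] at hcv
      have hcv' : ψn (y' + t • d) ≤ (((1 - t) * a + t * r : ℝ) : EReal) := by
        rw [EReal.coe_add, EReal.coe_mul, EReal.coe_mul] at *
        exact hcv
      set c : ℝ := (ψn (y' + t • d)).toReal with hc
      have hct : ψn (y' + t • d) ≠ ⊤ :=
        ne_top_of_le_ne_top (EReal.coe_ne_top _) hcv'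
      have hcy : ψn (y' + t • d) = (c : EReal) := (EReal.coe_toReal hct (hbot _)).symm
      rw [hcy] at hcv'
      have hcv2 : c ≤ (1 - t) * a + t * r := EReal.coe_le_coe_iff.mp hcv'
      have hmin := hy'min (y' + t • d)
      rw [hay, hcy] at hmin
      rw [← EReal.coe_add, ← EReal.coe_add] at hmin
      have hmin2 := EReal.coe_le_coe_iff.mp hmin
      have hin : ⟪gr, y' + t • d - xtilde⟫ = ⟪gr, y' - xtilde⟫ + t * ⟪gr, d⟫ := by
        have : y' + t • d - xtilde = (y' - xtilde) + t • d := by abel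
        rw [this, inner_add_right, real_inner_smul_right]
      have hnn : ‖y' + t • d - xtilde‖ ^ 2
          = ‖y' - xtilde‖ ^ 2 + 2 * t * ⟪y' - xtilde, d⟫ + t ^ 2 * ‖d‖ ^ 2 := by
        have h0 : y' + t • d - xtilde = (y' - xtilde) + t • d := by abel
        rw [h0, norm_add_sq_real, real_inner_smul_right, norm_smul]
        simp [mul_pow, sq_abs]
        ring
      rw [hin, hnn] at hmin2
      have htineq : t * a ≤ t * ⟪gr, d⟫ + L / 2 * (2 * t * ⟪y' - xtilde, d⟫ + t ^ 2 * ‖d‖ ^ 2)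
          + t * r := by nlinarith [hmin2, hcv2]
      have h2 : t * a ≤ t * (⟪gr, d⟫ + L * ⟪y' - xtilde, d⟫ + L / 2 * t * ‖d‖ ^ 2 + r) := by
        nlinarith [htineq]
      exact (mul_le_mul_iff_right₀ ht0).mp h2
    -- let t → 0
    have : ∀ ε : ℝ, 0 < ε → a - ⟪gr, d⟫ - L * ⟪y' - xtilde, d⟫ ≤ r + ε := by
      intro ε hε
      set M : ℝ := L / 2 * ‖d‖ ^ 2 with hM
      have hM0 : 0 ≤ M := mul_nonneg (by linarith) (sq_nonneg _)
      set t : ℝ := min 1 (ε / (M + 1)) with htdef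
      have ht0 : 0 < t := lt_min one_pos (div_pos hε (by linarith))
      have ht1 : t ≤ 1 := min_le_left _ _
      have htM : t * M ≤ ε := by
        have h1 : t ≤ ε / (M + 1) := min_le_right _ _
        have : t * M ≤ ε / (M + 1) * (M + 1) := by nlinarith
        calc t * M ≤ ε / (M + 1) * (M + 1) := this
          _ = ε := by field_simp
      have hk := key t ht0 ht1
      have : L / 2 * t * ‖d‖ ^ 2 = t * M := by rw [hM]; ring
      rw [this] at hk
      linarith
    linarith [le_of_forall_pos_le_add this]
  -- combine
  show (((ψs xtilde + ⟪gr, y' - xtilde⟫ + ⟪(L - μ) • (xtilde - y'), z - y'⟫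
      + μ / 2 * ‖y' - xtilde‖ ^ 2 + μ / 2 * ‖z - y'‖ ^ 2 : ℝ)) : EReal) + ψn y'
      ≤ (ψs z : EReal) + ψn z
  rw [hay, hrz, ← EReal.coe_add, ← EReal.coe_add, EReal.coe_le_coe_iff]
  have hsin : ⟪(L - μ) • (xtilde - y'), z - y'⟫ = -((L - μ) * ⟪y' - xtilde, d⟫) := by
    rw [real_inner_smul_left]
    have : xtilde - y' = -(y' - xtilde) := by abel
    rw [this, inner_neg_left, hd]
    ring
  have hin2 : ⟪gr, z - xtilde⟫ = ⟪gr, y' - xtilde⟫ + ⟪gr, d⟫ := by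
    have : z - xtilde = (y' - xtilde) + d := by rw [hd]; abel
    rw [this, inner_add_right]
  have hn2 : ‖z - xtilde‖ ^ 2 = ‖y' - xtilde‖ ^ 2 + 2 * ⟪y' - xtilde, d⟫ + ‖d‖ ^ 2 := by
    have : z - xtilde = (y' - xtilde) + d := by rw [hd]; abel
    rw [this, norm_add_sq_real]
  rw [hin2, hn2] at hA
  rw [hsin]
  have hdz : z - y' = d := rfl
  rw [hdz]
  nlinarith [hA, hB]
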